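/- Let s ∈ ℝ, c > 0, and define A_c(q,p) := (q₁p₂ − q₂p₁)² − 2c·((q₁p₂ − q₂p₁)·p₂ − s·q₁/√(q₁² + q₂²)) for q ∈ ℝ² \ {0}, p ∈ ℝ². Then: (i) for every twice-differentiable curve q : I → ℝ² \ {0} satisfying the Kepler equation q''(t) = −s·q(t)/‖q(t)‖³, the function t ↦ A_c(q(t), q'(t)) is constant; (ii) for every a > c and every nonzero point q on the ellipse {(q₁−c)²/a² + q₂²/(a²−c²) = 1} (whose foci are the origin and (2c,0)), the elastic reflection p' of any p ∈ ℝ² at this ellipse at q (with normal n = ((q₁−c)/a², q₂/(a²−c²))) satisfies A_c(q,p') = A_c(q,p); (iii) for every b with 0 < b < c and every nonzero point q on the hyperbola {(q₁−c)²/b² − q₂²/(c²−b²) = 1} (whose foci are the origin and (2c,0)), the elastic reflection p' of any p at this hyperbola at q (with normal n = ((q₁−c)/b², −q₂/(c²−b²))) satisfies A_c(q,p') = A_c(q,p). Hence A_c is a first integral of the Kepler billiard with any combination of confocal focused ellipses and hyperbolae as reflection wall. -/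

import Mathlib

/-- The (Gallavotti–Jauslin) first integral
`A_c(q,p) = (q₁p₂ − q₂p₁)² − 2c((q₁p₂ − q₂p₁)p₂ − s·q₁/√(q₁²+q₂²))` of Kepler billiards. -/
noncomputable def keplerA (s c : ℝ) (q p : ℝ × ℝ) : ℝ :=
  (q.1 * p.2 - q.2 * p.1) ^ 2
    - 2 * c * ((q.1 * p.2 - q.2 * p.1) * p.2 - s * q.1 / Real.sqrt (q.1 ^ 2 + q.2 ^ 2))

lemma refl_aux (c A B u w p1 p2 l : ℝ) (hB : B ≠ 0) (hAB : A = B + c ^ 2)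
    (hE : u ^ 2 * B + w ^ 2 * A = A * B)
    (hl : l * (u ^ 2 * B ^ 2 + w ^ 2 * A ^ 2) = 2 * (p1 * (u * B) + p2 * (w * A))) :
    ((u + c) * (p2 - l * (w * A)) - w * (p1 - l * (u * B))) ^ 2
      - 2 * c * (((u + c) * (p2 - l * (w * A)) - w * (p1 - l * (u * B))) * (p2 - l * (w * A)))
    = ((u + c) * p2 - w * p1) ^ 2 - 2 * c * (((u + c) * p2 - w * p1) * p2) := by
  subst hAB
  apply mul_right_cancel₀ hB
  linear_combination (l ^ 2 * c ^ 2 * w ^ 2 * (B + c ^ 2) - 2 * l * c ^ 2 * w * p2) * hE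
    - (c ^ 2 * w ^ 2 * l) * hl

lemma refl_main (s c A B : ℝ) (hA : A ≠ 0) (hB : B ≠ 0) (hAB : A = B + c ^ 2)
    (q p : ℝ × ℝ) (hE : (q.1 - c) ^ 2 * B + q.2 ^ 2 * A = A * B) :
    keplerA s c q (p - (2 * ((p.1 * ((q.1 - c) / A) + p.2 * (q.2 / B)) /
        (((q.1 - c) / A) ^ 2 + (q.2 / B) ^ 2))) • ((q.1 - c) / A, q.2 / B))
      = keplerA s c q p := by
  obtain ⟨q1, q2⟩ := q
  obtain ⟨p1, p2⟩ := p
  simp only at hE ⊢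
  set u := q1 - c with hu
  set w := q2 with hw
  -- nonvanishing of the scaled normal
  have hDt : u ^ 2 * B ^ 2 + w ^ 2 * A ^ 2 ≠ 0 := by
    intro h
    have hA2 : (0:ℝ) < A ^ 2 := by positivity
    have hB2 : (0:ℝ) < B ^ 2 := by positivity
    have hu2 : u ^ 2 = 0 := by nlinarith [sq_nonneg u, sq_nonneg w]
    have hw2 : w ^ 2 = 0 := by nlinarith [sq_nonneg u, sq_nonneg w]
    have hu0 : u = 0 := by nlinarith [sq_nonneg u]
    have hw0 : w = 0 := by nlinarith [sq_nonneg w]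
    rw [hu0, hw0] at hE
    simp at hE
    rcases hE with h | h
    · exact hA h
    · exact hB h
  have hDn : ((u / A) ^ 2 + (w / B) ^ 2) ≠ 0 := by
    have hrepr : (u / A) ^ 2 + (w / B) ^ 2
        = (u ^ 2 * B ^ 2 + w ^ 2 * A ^ 2) / (A ^ 2 * B ^ 2) := by
      field_simp
    rw [hrepr]
    exact div_ne_zero hDt (by positivity)
  set l0 := 2 * ((p1 * (u / A) + p2 * (w / B)) / ((u / A) ^ 2 + (w / B) ^ 2)) with hl0
  set lam := l0 / (A * B) with hlam
  have hl : lam * (u ^ 2 * B ^ 2 + w ^ 2 * A ^ 2) = 2 * (p1 * (u * B) + p2 * (w * A)) := by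
    rw [hlam, hl0]
    field_simp
    have hDt' : u ^ 2 * B ^ 2 + A ^ 2 * w ^ 2 ≠ 0 := by rwa [mul_comm (A ^ 2)]
    field_simp
  have e1 : l0 * (u / A) = lam * (u * B) := by rw [hlam]; field_simp
  have e2 : l0 * (w / B) = lam * (w * A) := by rw [hlam]; field_simp
  have main := refl_aux c A B u w p1 p2 lam hB hAB hE hl
  simp only [keplerA, Prod.mk_sub_mk, Prod.smul_mk, smul_eq_mul, Prod.fst, Prod.snd]
  rw [e1, e2]
  have hq1 : q1 = u + c := by rw [hu]; ring
  rw [hq1]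
  linear_combination main

/-- `A_c` is a first integral of the Kepler billiard with any combination of confocal
focused ellipses `(q₁−c)²/a² + q₂²/(a²−c²) = 1` (a > c) and focused hyperbolae
`(q₁−c)²/b² − q₂²/(c²−b²) = 1` (0 < b < c), all with foci the origin and `(2c, 0)`:
it is constant along solutions of `q'' = −s·q/‖q‖³` and invariant under elastic
reflections at these conics. -/
theorem stmt_8 (s c : ℝ) (hc : 0 < c) :
    (∀ I : Set ℝ, Convex ℝ I → ∀ q v : ℝ → ℝ × ℝ,
      (∀ t ∈ I, q t ≠ 0) →
      (∀ t ∈ I, HasDerivWithinAt q (v t) I t) →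
      (∀ t ∈ I, HasDerivWithinAt v
        ((-(s / Real.sqrt ((q t).1 ^ 2 + (q t).2 ^ 2) ^ 3)) • q t) I t) →
      ∀ t ∈ I, ∀ t' ∈ I, keplerA s c (q t) (v t) = keplerA s c (q t') (v t')) ∧
    (∀ a : ℝ, c < a → ∀ q p : ℝ × ℝ, q ≠ 0 →
      (q.1 - c) ^ 2 / a ^ 2 + q.2 ^ 2 / (a ^ 2 - c ^ 2) = 1 →
      ∀ n p' : ℝ × ℝ, n = ((q.1 - c) / a ^ 2, q.2 / (a ^ 2 - c ^ 2)) →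
      p' = p - (2 * ((p.1 * n.1 + p.2 * n.2) / (n.1 ^ 2 + n.2 ^ 2))) • n →
      keplerA s c q p' = keplerA s c q p) ∧
    (∀ b : ℝ, 0 < b → b < c → ∀ q p : ℝ × ℝ, q ≠ 0 →
      (q.1 - c) ^ 2 / b ^ 2 - q.2 ^ 2 / (c ^ 2 - b ^ 2) = 1 →
      ∀ n p' : ℝ × ℝ, n = ((q.1 - c) / b ^ 2, -q.2 / (c ^ 2 - b ^ 2)) →
      p' = p - (2 * ((p.1 * n.1 + p.2 * n.2) / (n.1 ^ 2 + n.2 ^ 2))) • n →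
      keplerA s c q p' = keplerA s c q p) := by
  refine ⟨?_, ?_, ?_⟩
  · -- Kepler flow part
    intro I hconv q v hq0 hq hv
    have key : ∀ t ∈ I, HasDerivWithinAt
        (fun τ => keplerA s c (q τ) (v τ)) ((fun _ : ℝ => (0:ℝ)) t) I t := by
      intro t ht
      have hne : q t ≠ 0 := hq0 t ht
      have h12 : (q t).1 ≠ 0 ∨ (q t).2 ≠ 0 := by
        by_contra h
        push_neg at h
        exact hne (Prod.ext h.1 h.2)
      have hXpos : 0 < (q t).1 ^ 2 + (q t).2 ^ 2 := by
        rcases h12 with h | h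
        · have : 0 < (q t).1 ^ 2 := by positivity
          nlinarith [sq_nonneg (q t).2]
        · have : 0 < (q t).2 ^ 2 := by positivity
          nlinarith [sq_nonneg (q t).1]
      have hq1 : HasDerivWithinAt (fun τ => (q τ).1) ((v t).1) I t := by
        simpa [Function.comp_def] using
          (ContinuousLinearMap.fst ℝ ℝ ℝ).hasFDerivAt.comp_hasDerivWithinAt t (hq t ht)
      have hq2 : HasDerivWithinAt (fun τ => (q τ).2) ((v t).2) I t := by
        simpa [Function.comp_def] using
          (ContinuousLinearMap.snd ℝ ℝ ℝ).hasFDerivAt.comp_hasDerivWithinAt t (hq t ht)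
      have hv1 : HasDerivWithinAt (fun τ => (v τ).1)
          (-(s / Real.sqrt ((q t).1 ^ 2 + (q t).2 ^ 2) ^ 3) * (q t).1) I t := by
        simpa [Function.comp_def] using
          (ContinuousLinearMap.fst ℝ ℝ ℝ).hasFDerivAt.comp_hasDerivWithinAt t (hv t ht)
      have hv2 : HasDerivWithinAt (fun τ => (v τ).2)
          (-(s / Real.sqrt ((q t).1 ^ 2 + (q t).2 ^ 2) ^ 3) * (q t).2) I t := by
        simpa [Function.comp_def] using
          (ContinuousLinearMap.snd ℝ ℝ ℝ).hasFDerivAt.comp_hasDerivWithinAt t (hv t ht)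
      have hX : HasDerivWithinAt (fun τ => (q τ).1 ^ 2 + (q τ).2 ^ 2)
          (2 * (q t).1 ^ 1 * (v t).1 + 2 * (q t).2 ^ 1 * (v t).2) I t := by
        exact ((hq1.pow 2).add (hq2.pow 2))
      have hsq : HasDerivWithinAt (fun τ => Real.sqrt ((q τ).1 ^ 2 + (q τ).2 ^ 2))
          ((2 * (q t).1 ^ 1 * (v t).1 + 2 * (q t).2 ^ 1 * (v t).2) /
            (2 * Real.sqrt ((q t).1 ^ 2 + (q t).2 ^ 2))) I t :=
        hX.sqrt hXpos.ne'
      have hrne : Real.sqrt ((q t).1 ^ 2 + (q t).2 ^ 2) ≠ 0 :=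
        (Real.sqrt_pos.2 hXpos).ne'
      have hfrac : HasDerivWithinAt
          (fun τ => s * (q τ).1 / Real.sqrt ((q τ).1 ^ 2 + (q τ).2 ^ 2))
          ((s * (v t).1 * Real.sqrt ((q t).1 ^ 2 + (q t).2 ^ 2)
            - s * (q t).1 * ((2 * (q t).1 ^ 1 * (v t).1 + 2 * (q t).2 ^ 1 * (v t).2) /
              (2 * Real.sqrt ((q t).1 ^ 2 + (q t).2 ^ 2)))) /
            Real.sqrt ((q t).1 ^ 2 + (q t).2 ^ 2) ^ 2) I t :=
        (hq1.const_mul s).div hsq hrne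
      have hL : HasDerivWithinAt (fun τ => (q τ).1 * (v τ).2 - (q τ).2 * (v τ).1)
          (((v t).1 * (v t).2 + (q t).1 *
              (-(s / Real.sqrt ((q t).1 ^ 2 + (q t).2 ^ 2) ^ 3) * (q t).2))
            - ((v t).2 * (v t).1 + (q t).2 *
              (-(s / Real.sqrt ((q t).1 ^ 2 + (q t).2 ^ 2) ^ 3) * (q t).1))) I t :=
        (hq1.mul hv2).sub (hq2.mul hv1)
      have hA := (hL.pow 2).sub (((hL.mul hv2).sub hfrac).const_mul (2 * c))
      have hr2 : Real.sqrt ((q t).1 ^ 2 + (q t).2 ^ 2) ^ 2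
          = (q t).1 ^ 2 + (q t).2 ^ 2 := Real.sq_sqrt hXpos.le
      suffices h : HasDerivWithinAt (fun τ =>
          ((q τ).1 * (v τ).2 - (q τ).2 * (v τ).1) ^ 2
            - 2 * c * (((q τ).1 * (v τ).2 - (q τ).2 * (v τ).1) * (v τ).2
              - s * (q τ).1 / Real.sqrt ((q τ).1 ^ 2 + (q τ).2 ^ 2)))
          ((fun _ : ℝ => (0:ℝ)) t) I t by
        exact h
      refine HasDerivWithinAt.congr_deriv hA ?_
      rw [eq_comm]
      field_simp
      ring_nf
      linear_combination (-2 * s * c * (v t).1) * hr2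
    intro t ht t' ht'
    have h := hconv.norm_image_sub_le_of_norm_hasDerivWithin_le (C := 0) key
      (fun x _ => by simp) ht' ht
    rw [zero_mul] at h
    exact sub_eq_zero.1 (norm_le_zero_iff.1 h)
  · -- ellipse
    intro a ha q p hq0 hconic n p' hn hp'
    have ha0 : (0:ℝ) < a := hc.trans ha
    have hA : (a : ℝ) ^ 2 ≠ 0 := pow_ne_zero 2 ha0.ne'
    have hB : a ^ 2 - c ^ 2 ≠ 0 := by nlinarith
    have hE : (q.1 - c) ^ 2 * (a ^ 2 - c ^ 2) + q.2 ^ 2 * a ^ 2 = a ^ 2 * (a ^ 2 - c ^ 2) := by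
      field_simp at hconic
      linear_combination hconic
    subst hn hp'
    exact refl_main s c (a ^ 2) (a ^ 2 - c ^ 2) hA hB (by ring) q p hE
  · -- hyperbola
    intro b hb hbc q p hq0 hconic n p' hn hp'
    have hA : (b : ℝ) ^ 2 ≠ 0 := pow_ne_zero 2 hb.ne'
    have hB : b ^ 2 - c ^ 2 ≠ 0 := by nlinarith
    have hC : c ^ 2 - b ^ 2 ≠ 0 := by nlinarith
    have hn' : n = ((q.1 - c) / b ^ 2, q.2 / (b ^ 2 - c ^ 2)) := by
      rw [hn]
      congr 1
      field_simp
      ring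
    have hE : (q.1 - c) ^ 2 * (b ^ 2 - c ^ 2) + q.2 ^ 2 * b ^ 2 = b ^ 2 * (b ^ 2 - c ^ 2) := by
      field_simp at hconic
      linear_combination -hconic
    subst hn' hp'
    exact refl_main s c (b ^ 2) (b ^ 2 - c ^ 2) hA hB (by ring) q p hE
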